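/- The 4×4 integer matrix [[4,0,-1,0],[0,-4,0,1],[-1,0,2-n,n],[0,1,n,-n-2]] and the 2×2 matrix [[7,4n],[0,7]] present isomorphic abelian groups (have isomorphic cokernels) for every integer n. -/

import Mathlib

/-- The Goeritz matrix of the symmetric union `K_n(5_2)`. -/
def goeritz (n : ℤ) : Matrix (Fin 4) (Fin 4) ℤ :=
  Matrix.of ![![4, 0, -1, 0], ![0, -4, 0, 1], ![-1, 0, 2 - n, n], ![0, 1, n, -n - 2]]

/-- The reduced presentation matrix `[[7, 4n], [0, 7]]`. -/
def redMat (n : ℤ) : Matrix (Fin 2) (Fin 2) ℤ :=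
  Matrix.of ![![7, 4 * n], ![0, 7]]

/-- The abelian group presented by `goeritz n`. -/
def goeritzCoker (n : ℤ) : Type :=
  (Fin 4 → ℤ) ⧸ LinearMap.range (Matrix.toLin' (goeritz n))

/-- The abelian group presented by `redMat n`. -/
def redCoker (n : ℤ) : Type :=
  (Fin 2 → ℤ) ⧸ LinearMap.range (Matrix.toLin' (redMat n))

noncomputable instance (n : ℤ) : AddCommGroup (goeritzCoker n) :=
  inferInstanceAs (AddCommGroup ((Fin 4 → ℤ) ⧸ LinearMap.range (Matrix.toLin' (goeritz n))))

noncomputable instance (n : ℤ) : AddCommGroup (redCoker n) :=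
  inferInstanceAs (AddCommGroup ((Fin 2 → ℤ) ⧸ LinearMap.range (Matrix.toLin' (redMat n))))

section Aux

open Matrix LinearMap

/-- If `F, G` give a chain homotopy equivalence between the presentations `A` and `B`,
then the cokernels are isomorphic. -/
noncomputable def cokerEquivAux {m k : ℕ}
    (A : Matrix (Fin m) (Fin m) ℤ) (B : Matrix (Fin k) (Fin k) ℤ)
    (F : Matrix (Fin k) (Fin m) ℤ) (G : Matrix (Fin m) (Fin k) ℤ)
    (X : Matrix (Fin k) (Fin m) ℤ) (Y : Matrix (Fin m) (Fin k) ℤ)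
    (H : Matrix (Fin m) (Fin m) ℤ) (K : Matrix (Fin k) (Fin k) ℤ)
    (hFA : F * A = B * X) (hGB : G * B = A * Y)
    (hGF : G * F = 1 + A * H) (hFG : F * G = 1 + B * K) :
    ((Fin m → ℤ) ⧸ LinearMap.range (Matrix.toLin' A)) ≃ₗ[ℤ]
    ((Fin k → ℤ) ⧸ LinearMap.range (Matrix.toLin' B)) := by
  refine LinearEquiv.ofLinear
    (Submodule.liftQ _ ((LinearMap.range (Matrix.toLin' B)).mkQ ∘ₗ Matrix.toLin' F) ?_)
    (Submodule.liftQ _ ((LinearMap.range (Matrix.toLin' A)).mkQ ∘ₗ Matrix.toLin' G) ?_)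
    ?_ ?_
  · rintro _ ⟨x, rfl⟩
    simp only [LinearMap.mem_ker, LinearMap.comp_apply, Submodule.mkQ_apply,
      Submodule.Quotient.mk_eq_zero]
    refine ⟨Matrix.toLin' X x, ?_⟩
    rw [← Matrix.toLin'_mul_apply, ← hFA, Matrix.toLin'_mul_apply]
  · rintro _ ⟨x, rfl⟩
    simp only [LinearMap.mem_ker, LinearMap.comp_apply, Submodule.mkQ_apply,
      Submodule.Quotient.mk_eq_zero]
    refine ⟨Matrix.toLin' Y x, ?_⟩
    rw [← Matrix.toLin'_mul_apply, ← hGB, Matrix.toLin'_mul_apply]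
  · refine Submodule.linearMap_qext _ (LinearMap.ext fun x => ?_)
    simp only [LinearMap.comp_apply, Submodule.liftQ_apply, Submodule.mkQ_apply,
      LinearMap.id_apply]
    rw [Submodule.Quotient.eq]
    refine ⟨Matrix.toLin' K x, ?_⟩
    rw [← Matrix.toLin'_mul_apply, ← Matrix.toLin'_mul_apply, hFG, map_add,
      LinearMap.add_apply, Matrix.toLin'_one]
    simp
  · refine Submodule.linearMap_qext _ (LinearMap.ext fun x => ?_)
    simp only [LinearMap.comp_apply, Submodule.liftQ_apply, Submodule.mkQ_apply,
      LinearMap.id_apply]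
    rw [Submodule.Quotient.eq]
    refine ⟨Matrix.toLin' H x, ?_⟩
    rw [← Matrix.toLin'_mul_apply, ← Matrix.toLin'_mul_apply, hGF, map_add,
      LinearMap.add_apply, Matrix.toLin'_one]
    simp

def matF : Matrix (Fin 2) (Fin 4) ℤ := Matrix.of ![![0, 1, 0, 4], ![1, 1, 4, 4]]
def matG : Matrix (Fin 4) (Fin 2) ℤ := Matrix.of ![![-1, 1], ![1, 0], ![0, 0], ![0, 0]]
def matX : Matrix (Fin 2) (Fin 4) ℤ := Matrix.of ![![0, 0, 0, -1], ![0, 0, 1, -1]]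
def matY (n : ℤ) : Matrix (Fin 4) (Fin 2) ℤ :=
  Matrix.of ![![-2, 2 - n], ![-2, -n], ![-1, 1], ![-1, 0]]
def matH : Matrix (Fin 4) (Fin 4) ℤ :=
  Matrix.of ![![0, 0, 1, 0], ![0, 0, 0, -1], ![0, 0, 0, 0], ![0, 0, 0, 0]]

theorem cons_val_three_aux {α : Type*} {m : ℕ} (x : α) (u : Fin m.succ.succ.succ → α) :
    vecCons x u 3 = vecHead (vecTail (vecTail u)) := rfl

end Aux

theorem goeritz_coker_iso_redMat_coker (n : ℤ) :
    Nonempty (goeritzCoker n ≃+ redCoker n) := by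
  have h1 : matF * goeritz n = redMat n * matX := by
    simp only [← Matrix.ext_iff, Fin.forall_fin_succ_pi, Fin.forall_fin_zero_pi]
    norm_num [Matrix.mul_apply, Fin.sum_univ_four, Fin.sum_univ_two, matF, goeritz, redMat, matX,
      Matrix.add_apply, Matrix.one_apply, Matrix.cons_val_succ, Fin.forall_fin_succ,
      Matrix.cons_val_two, cons_val_three_aux, Matrix.vecHead, Matrix.vecTail]
    repeat' apply And.intro
    all_goals first | decide | ring1
  have h2 : matG * redMat n = goeritz n * matY n := by
    simp only [← Matrix.ext_iff, Fin.forall_fin_succ_pi, Fin.forall_fin_zero_pi]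
    norm_num [Matrix.mul_apply, Fin.sum_univ_four, Fin.sum_univ_two, matG, goeritz, redMat, matY,
      Matrix.add_apply, Matrix.one_apply, Matrix.cons_val_succ, Fin.forall_fin_succ,
      Matrix.cons_val_two, cons_val_three_aux, Matrix.vecHead, Matrix.vecTail]
    repeat' apply And.intro
    all_goals first | decide | ring1
  have h3 : matG * matF = 1 + goeritz n * matH := by
    simp only [← Matrix.ext_iff, Fin.forall_fin_succ_pi, Fin.forall_fin_zero_pi]
    norm_num [Matrix.mul_apply, Fin.sum_univ_four, Fin.sum_univ_two, matG, matF, goeritz, matH,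
      Matrix.add_apply, Matrix.one_apply, Matrix.cons_val_succ, Fin.forall_fin_succ]
    repeat' apply And.intro
    all_goals first | decide | ring1
  have h4 : matF * matG = 1 + redMat n * (0 : Matrix (Fin 2) (Fin 2) ℤ) := by
    simp only [← Matrix.ext_iff, Fin.forall_fin_succ_pi, Fin.forall_fin_zero_pi]
    norm_num [Matrix.mul_apply, Fin.sum_univ_four, Fin.sum_univ_two, matF, matG, redMat,
      Matrix.add_apply, Matrix.one_apply, Matrix.cons_val_succ, Fin.forall_fin_succ]
    repeat' apply And.intro
    all_goals first | decide | ring1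
  exact ⟨(cokerEquivAux (goeritz n) (redMat n) matF matG matX (matY n) matH 0
    h1 h2 h3 h4).toAddEquiv⟩
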